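/- For every u ∈ ℝⁿ there exists exactly one modified Newton direction d at u; that is, the generalized Newton equation G(u)d = −F(u) of the modified B-semismooth Newton method has a unique solution d ∈ ℝⁿ. -/

import Mathlib

open scoped RealInnerProductSpace
open Filter Topology

noncomputable section

abbrev Euc (n : ℕ) := EuclideanSpace ℝ (Fin n)

variable {n : ℕ}

/-- Componentwise soft-thresholding operator `(S_{γw}(v))_k = sgn(v_k)·max(|v_k| − γw_k, 0)`. -/
def soft (γ : ℝ) (w : Fin n → ℝ) (v : Euc n) : Euc n :=
  WithLp.toLp 2 fun k => Real.sign (v k) * max (|v k| - γ * w k) 0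

/-- The map `F(u) = u − S_{γw}(u − γ∇g(u))`. -/
def Fm (g : Euc n → ℝ) (γ : ℝ) (w : Fin n → ℝ) (u : Euc n) : Euc n :=
  u - soft γ w (u - γ • gradient g u)

/-- The merit functional `Θ(u) = ‖F(u)‖₂²`. -/
def Th (g : Euc n → ℝ) (γ : ℝ) (w : Fin n → ℝ) (u : Euc n) : ℝ :=
  ‖Fm g γ w u‖ ^ 2

/-- The Hessian of `g` at `u`, applied to `d`: `∇²g(u)d`. -/
def hess (g : Euc n → ℝ) (u d : Euc n) : Euc n :=
  fderiv ℝ (gradient g) u d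

/-- Standing assumptions on `g`: twice continuously differentiable, Lipschitz continuous
second derivative, and uniform bounds `c₁‖h‖² ≤ ⟨∇²g(u)h, h⟩ ≤ c₂‖h‖²`. -/
structure Assump (n : ℕ) (g : Euc n → ℝ) (c₁ c₂ : ℝ) : Prop where
  contDiff : ContDiff ℝ 2 g
  lipHess : ∃ L : NNReal, LipschitzWith L fun u => fderiv ℝ (gradient g) u
  c1_pos : 0 < c₁
  c1_le_c2 : c₁ ≤ c₂
  lower : ∀ u h : Euc n, c₁ * ‖h‖ ^ 2 ≤ ⟪hess g u h, h⟫
  upper : ∀ u h : Euc n, ⟪hess g u h, h⟫ ≤ c₂ * ‖h‖ ^ 2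

/-- `A⁺(u)`. -/
def Ap (g : Euc n → ℝ) (γ : ℝ) (w : Fin n → ℝ) (u : Euc n) : Set (Fin n) :=
  {k | γ * gradient g u k + γ * w k < u k}

/-- `A⁻(u)`. -/
def Am (g : Euc n → ℝ) (γ : ℝ) (w : Fin n → ℝ) (u : Euc n) : Set (Fin n) :=
  {k | u k < γ * gradient g u k - γ * w k}

/-- `A(u) = A⁺(u) ∪ A⁻(u)`. -/
def Aset (g : Euc n → ℝ) (γ : ℝ) (w : Fin n → ℝ) (u : Euc n) : Set (Fin n) :=
  Ap g γ w u ∪ Am g γ w u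

/-- `I°(u)`. -/
def Iz (g : Euc n → ℝ) (γ : ℝ) (w : Fin n → ℝ) (u : Euc n) : Set (Fin n) :=
  {k | γ * gradient g u k - γ * w k < u k ∧ u k < γ * gradient g u k + γ * w k}

/-- `I⁺(u)`. -/
def Ipl (g : Euc n → ℝ) (γ : ℝ) (w : Fin n → ℝ) (u : Euc n) : Set (Fin n) :=
  {k | u k = γ * gradient g u k + γ * w k}

/-- `I⁻(u)`. -/
def Imi (g : Euc n → ℝ) (γ : ℝ) (w : Fin n → ℝ) (u : Euc n) : Set (Fin n) :=
  {k | u k = γ * gradient g u k - γ * w k}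

/-- `A⁺₊(u)`. -/
def App (g : Euc n → ℝ) (γ : ℝ) (w : Fin n → ℝ) (u : Euc n) : Set (Fin n) :=
  {k | γ * gradient g u k + γ * w k < u k ∧ u k < 0}

/-- `A⁻₋(u)`. -/
def Amm (g : Euc n → ℝ) (γ : ℝ) (w : Fin n → ℝ) (u : Euc n) : Set (Fin n) :=
  {k | 0 < u k ∧ u k < γ * gradient g u k - γ * w k}

/-- `I°₊(u)`. -/
def Izp (g : Euc n → ℝ) (γ : ℝ) (w : Fin n → ℝ) (u : Euc n) : Set (Fin n) :=
  {k | γ * gradient g u k - γ * w k < u k ∧ u k < γ * gradient g u k + γ * w k ∧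
    γ * gradient g u k + γ * w k < 0}

/-- `I°₋(u)`. -/
def Izm (g : Euc n → ℝ) (γ : ℝ) (w : Fin n → ℝ) (u : Euc n) : Set (Fin n) :=
  {k | 0 < γ * gradient g u k - γ * w k ∧ γ * gradient g u k - γ * w k < u k ∧
    u k < γ * gradient g u k + γ * w k}

/-- `Ā⁺(u) = A⁺(u) \ A⁺₊(u)`. -/
def ApBar (g : Euc n → ℝ) (γ : ℝ) (w : Fin n → ℝ) (u : Euc n) : Set (Fin n) :=
  Ap g γ w u \ App g γ w u

/-- `Ā⁻(u) = A⁻(u) \ A⁻₋(u)`. -/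
def AmBar (g : Euc n → ℝ) (γ : ℝ) (w : Fin n → ℝ) (u : Euc n) : Set (Fin n) :=
  Am g γ w u \ Amm g γ w u

/-- `Ā(u) = Ā⁺(u) ∪ Ā⁻(u)`. -/
def ABar (g : Euc n → ℝ) (γ : ℝ) (w : Fin n → ℝ) (u : Euc n) : Set (Fin n) :=
  ApBar g γ w u ∪ AmBar g γ w u

/-- `Ī°(u) = I°(u) \ (I°₊(u) ∪ I°₋(u))`. -/
def IzBar (g : Euc n → ℝ) (γ : ℝ) (w : Fin n → ℝ) (u : Euc n) : Set (Fin n) :=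
  Iz g γ w u \ (Izp g γ w u ∪ Izm g γ w u)

/-- `Ī⁺(u) = I⁺(u) ∪ A⁺₊(u) ∪ I°₊(u)`. -/
def IplBar (g : Euc n → ℝ) (γ : ℝ) (w : Fin n → ℝ) (u : Euc n) : Set (Fin n) :=
  Ipl g γ w u ∪ App g γ w u ∪ Izp g γ w u

/-- `Ī⁻(u) = I⁻(u) ∪ A⁻₋(u) ∪ I°₋(u)`. -/
def ImiBar (g : Euc n → ℝ) (γ : ℝ) (w : Fin n → ℝ) (u : Euc n) : Set (Fin n) :=
  Imi g γ w u ∪ Amm g γ w u ∪ Izm g γ w u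

/-- `d` is a modified Newton direction at `u`. -/
def IsModDir (g : Euc n → ℝ) (γ : ℝ) (w : Fin n → ℝ) (u d : Euc n) : Prop :=
  (∀ k ∈ ABar g γ w u, γ * hess g u d k = - Fm g γ w u k) ∧
  (∀ k ∈ IzBar g γ w u, d k = - u k) ∧
  (∀ k ∈ IplBar g γ w u, 0 ≤ d k + u k ∧ 0 ≤ γ * hess g u d k + Fm g γ w u k ∧
    (d k + u k) * (γ * hess g u d k + Fm g γ w u k) = 0) ∧
  (∀ k ∈ ImiBar g γ w u, d k + u k ≤ 0 ∧ γ * hess g u d k + Fm g γ w u k ≤ 0 ∧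
    (d k + u k) * (γ * hess g u d k + Fm g γ w u k) = 0)

/-- `d` is a B-Newton direction at `u` (unmodified index sets). -/
def IsBDir (g : Euc n → ℝ) (γ : ℝ) (w : Fin n → ℝ) (u d : Euc n) : Prop :=
  (∀ k ∈ Aset g γ w u, γ * hess g u d k = - Fm g γ w u k) ∧
  (∀ k ∈ Iz g γ w u, d k = - u k) ∧
  (∀ k ∈ Ipl g γ w u, 0 ≤ d k + u k ∧ 0 ≤ γ * hess g u d k + Fm g γ w u k ∧
    (d k + u k) * (γ * hess g u d k + Fm g γ w u k) = 0) ∧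
  (∀ k ∈ Imi g γ w u, d k + u k ≤ 0 ∧ γ * hess g u d k + Fm g γ w u k ≤ 0 ∧
    (d k + u k) * (γ * hess g u d k + Fm g γ w u k) = 0)

/-- `t = β^l` where `l` is the smallest nonnegative integer satisfying the Armijo inequality. -/
def ArmijoStepsize (g : Euc n → ℝ) (γ : ℝ) (w : Fin n → ℝ) (β σ : ℝ) (u d : Euc n)
    (t : ℝ) : Prop :=
  ∃ l : ℕ, t = β ^ l ∧
    Th g γ w (u + (β ^ l) • d) ≤ (1 - 2 * σ * β ^ l) * Th g γ w u ∧
    ∀ l' < l, ¬ (Th g γ w (u + (β ^ l') • d) ≤ (1 - 2 * σ * β ^ l') * Th g γ w u)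

/-- The modified B-semismooth Newton iteration with Armijo damping. -/
def ModIter (g : Euc n → ℝ) (γ : ℝ) (w : Fin n → ℝ) (β σ : ℝ)
    (useq dseq : ℕ → Euc n) (tseq : ℕ → ℝ) : Prop :=
  (∀ j, IsModDir g γ w (useq j) (dseq j)) ∧
  (∀ j, ArmijoStepsize g γ w β σ (useq j) (dseq j) (tseq j)) ∧
  (∀ j, useq (j + 1) = useq j + tseq j • dseq j)

/-- The B-semismooth Newton iteration (unmodified index sets) with Armijo damping. -/
def BIter (g : Euc n → ℝ) (γ : ℝ) (w : Fin n → ℝ) (β σ : ℝ)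
    (useq dseq : ℕ → Euc n) (tseq : ℕ → ℝ) : Prop :=
  (∀ j, IsBDir g γ w (useq j) (dseq j)) ∧
  (∀ j, ArmijoStepsize g γ w β σ (useq j) (dseq j) (tseq j)) ∧
  (∀ j, useq (j + 1) = useq j + tseq j • dseq j)

open Classical in
private def Pmap {n : ℕ} (Sz Sp Sm : Set (Fin n)) (b : Euc n) (x : Euc n) : Euc n :=
  WithLp.toLp 2 fun k =>
    if k ∈ Sz then b k
    else if k ∈ Sp then max (x k) (b k)
    else if k ∈ Sm then min (x k) (b k)
    else x k

open Classical in
private lemma Pmap_apply {n : ℕ} (Sz Sp Sm : Set (Fin n)) (b : Euc n) (x : Euc n) (k : Fin n) :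
    Pmap Sz Sp Sm b x k =
      if k ∈ Sz then b k
      else if k ∈ Sp then max (x k) (b k)
      else if k ∈ Sm then min (x k) (b k)
      else x k := rfl

private lemma euc_norm_le {n : ℕ} (x y : Euc n) (h : ∀ k, |x k| ≤ |y k|) : ‖x‖ ≤ ‖y‖ := by
  rw [EuclideanSpace.norm_eq, EuclideanSpace.norm_eq]
  apply Real.sqrt_le_sqrt
  apply Finset.sum_le_sum
  intro i _
  simp only [Real.norm_eq_abs]
  exact pow_le_pow_left₀ (abs_nonneg _) (h i) 2

private lemma Pmap_lip {n : ℕ} (Sz Sp Sm : Set (Fin n)) (b : Euc n) (x y : Euc n) (k : Fin n) :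
    |Pmap Sz Sp Sm b x k - Pmap Sz Sp Sm b y k| ≤ |x k - y k| := by
  rw [Pmap_apply, Pmap_apply]
  split_ifs with h1 h2 h3
  · simpa using abs_nonneg (x k - y k)
  · exact abs_max_sub_max_le_abs _ _ _
  · refine (abs_min_sub_min_le_max _ _ _ _).trans ?_
    rw [sub_self, abs_zero]
    exact max_le le_rfl (abs_nonneg _)
  · exact le_rfl

set_option maxHeartbeats 1000000 in
/-- Unique solvability of the mixed linear-complementarity system defined by a strongly
monotone continuous linear map `M`, residual shift `F`, bound vector `b`, and a partition
of indices into `SA` (equation), `Sz` (fixed), `Sp` (lower-bound complementarity) and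
`Sm` (upper-bound complementarity). -/
private theorem aux_lcp {n : ℕ} (c₁ : ℝ) (hc1 : 0 < c₁) (M : Euc n →L[ℝ] Euc n)
    (mon : ∀ h : Euc n, c₁ * ‖h‖ ^ 2 ≤ ⟪M h, h⟫) (F b : Euc n)
    (SA Sz Sp Sm : Set (Fin n))
    (cover : ∀ k, k ∉ Sz → k ∉ Sp → k ∉ Sm → k ∈ SA)
    (dAz : ∀ k, k ∈ SA → k ∉ Sz) (dAp : ∀ k, k ∈ SA → k ∉ Sp) (dAm : ∀ k, k ∈ SA → k ∉ Sm)
    (dzp : ∀ k, k ∈ Sz → k ∉ Sp) (dzm : ∀ k, k ∈ Sz → k ∉ Sm)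
    (dpm : ∀ k, k ∈ Sp → k ∉ Sm) :
    ∃! d : Euc n,
      (∀ k ∈ SA, M d k = - F k) ∧
      (∀ k ∈ Sz, d k = b k) ∧
      (∀ k ∈ Sp, 0 ≤ d k - b k ∧ 0 ≤ M d k + F k ∧ (d k - b k) * (M d k + F k) = 0) ∧
      (∀ k ∈ Sm, d k - b k ≤ 0 ∧ M d k + F k ≤ 0 ∧ (d k - b k) * (M d k + F k) = 0) := by
  classical
  set C : ℝ := max ‖M‖ c₁ with hCdef
  have hC : (0:ℝ) < C := lt_of_lt_of_le hc1 (le_max_right _ _)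
  have hMC : ‖M‖ ≤ C := le_max_left _ _
  have hc1C : c₁ ≤ C := le_max_right _ _
  set a : ℝ := c₁ / C ^ 2 with hadef
  have ha : 0 < a := by positivity
  have hκ2 : 0 ≤ 1 - c₁ ^ 2 / C ^ 2 := by
    rw [sub_nonneg, div_le_one (by positivity)]
    nlinarith
  set κ : ℝ := Real.sqrt (1 - c₁ ^ 2 / C ^ 2) with hkdef
  have hκ0 : 0 ≤ κ := Real.sqrt_nonneg _
  have hκsq : κ ^ 2 = 1 - c₁ ^ 2 / C ^ 2 := Real.sq_sqrt hκ2
  have hκ1 : κ < 1 := by nlinarith [div_pos (pow_pos hc1 2) (pow_pos hC 2)]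
  -- the fixed point map
  set T : Euc n → Euc n := fun d => Pmap Sz Sp Sm b (d - a • (M d + F)) with hTdef
  -- contraction estimate for the linear part
  have quad : ∀ h : Euc n, ‖h - a • M h‖ ≤ κ * ‖h‖ := by
    intro h
    have h1 : ‖h - a • M h‖ ^ 2 = ‖h‖ ^ 2 - 2 * ⟪h, a • M h⟫ + ‖a • M h‖ ^ 2 :=
      norm_sub_sq_real h (a • M h)
    have h2 : ⟪h, a • M h⟫ = a * ⟪M h, h⟫ := by
      rw [real_inner_smul_right, real_inner_comm]
    have h3 : a * (c₁ * ‖h‖ ^ 2) ≤ a * ⟪M h, h⟫ := mul_le_mul_of_nonneg_left (mon h) ha.le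
    have h4 : ‖a • M h‖ ≤ a * (C * ‖h‖) := by
      rw [norm_smul, Real.norm_eq_abs, abs_of_pos ha]
      refine mul_le_mul_of_nonneg_left ?_ ha.le
      exact (M.le_opNorm h).trans (mul_le_mul_of_nonneg_right hMC (norm_nonneg _))
    have h5 : ‖a • M h‖ ^ 2 ≤ (a * (C * ‖h‖)) ^ 2 :=
      pow_le_pow_left₀ (norm_nonneg _) h4 2
    have e' : a * (c₁ * ‖h‖ ^ 2) = c₁ ^ 2 / C ^ 2 * ‖h‖ ^ 2 := by
      rw [hadef]; field_simp
    have e : (a * (C * ‖h‖)) ^ 2 = c₁ ^ 2 / C ^ 2 * ‖h‖ ^ 2 := by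
      rw [hadef]; field_simp
    have h6 : ‖h - a • M h‖ ^ 2 ≤ κ ^ 2 * ‖h‖ ^ 2 := by
      rw [h1, h2, hκsq]
      nlinarith [h3, h5, e, e']
    calc ‖h - a • M h‖ = Real.sqrt (‖h - a • M h‖ ^ 2) := (Real.sqrt_sq (norm_nonneg _)).symm
      _ ≤ Real.sqrt (κ ^ 2 * ‖h‖ ^ 2) := Real.sqrt_le_sqrt h6
      _ = κ * ‖h‖ := by
          rw [← mul_pow, Real.sqrt_sq (mul_nonneg hκ0 (norm_nonneg _))]
  have harg : ∀ x y : Euc n,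
      (x - a • (M x + F)) - (y - a • (M y + F)) = (x - y) - a • M (x - y) := by
    intro x y
    simp only [map_sub, smul_add, smul_sub]
    abel
  have hTlip : ∀ x y : Euc n, ‖T x - T y‖ ≤ κ * ‖x - y‖ := by
    intro x y
    have step1 : ‖T x - T y‖ ≤ ‖(x - y) - a • M (x - y)‖ := by
      apply euc_norm_le
      intro k
      rw [← harg x y]
      simp only [hTdef, PiLp.sub_apply]
      exact Pmap_lip Sz Sp Sm b _ _ k
    exact step1.trans (quad (x - y))
  -- contraction
  have hlip : LipschitzWith (Real.toNNReal κ) T := by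
    refine LipschitzWith.of_dist_le_mul fun x y => ?_
    rw [dist_eq_norm, dist_eq_norm, Real.coe_toNNReal κ hκ0]
    exact hTlip x y
  have hcontr : ContractingWith (Real.toNNReal κ) T :=
    ⟨NNReal.coe_lt_one.mp (by rw [Real.coe_toNNReal κ hκ0]; exact hκ1), hlip⟩
  obtain ⟨d₀, hfix, -, -⟩ := hcontr.exists_fixedPoint 0 (edist_ne_top _ _)
  -- componentwise formula for the argument of `Pmap`
  have hcomp : ∀ (d : Euc n) (k : Fin n),
      (d - a • (M d + F)) k = d k - a * (M d k + F k) := by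
    intro d k
    simp only [PiLp.sub_apply, PiLp.smul_apply, PiLp.add_apply, smul_eq_mul, mul_add]
  -- equivalence between the system and the fixed-point equation
  have key : ∀ d : Euc n,
      ((∀ k ∈ SA, M d k = - F k) ∧
       (∀ k ∈ Sz, d k = b k) ∧
       (∀ k ∈ Sp, 0 ≤ d k - b k ∧ 0 ≤ M d k + F k ∧ (d k - b k) * (M d k + F k) = 0) ∧
       (∀ k ∈ Sm, d k - b k ≤ 0 ∧ M d k + F k ≤ 0 ∧ (d k - b k) * (M d k + F k) = 0))
      ↔ T d = d := by
    intro d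
    constructor
    · rintro ⟨hA, hz, hp, hm⟩
      refine PiLp.ext fun k => ?_
      simp only [hTdef]
      rw [Pmap_apply, hcomp]
      by_cases h1 : k ∈ Sz
      · rw [if_pos h1]; exact (hz k h1).symm
      rw [if_neg h1]
      by_cases h2 : k ∈ Sp
      · rw [if_pos h2]
        obtain ⟨hb, hq, hc⟩ := hp k h2
        rcases mul_eq_zero.mp hc with h | h
        · have hdb : d k = b k := by linarith
          rw [hdb]
          exact max_eq_right (by nlinarith)
        · rw [h, mul_zero, sub_zero]
          exact max_eq_left (by linarith)
      rw [if_neg h2]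
      by_cases h3 : k ∈ Sm
      · rw [if_pos h3]
        obtain ⟨hb, hq, hc⟩ := hm k h3
        rcases mul_eq_zero.mp hc with h | h
        · have hdb : d k = b k := by linarith
          rw [hdb]
          exact min_eq_right (by nlinarith)
        · rw [h, mul_zero, sub_zero]
          exact min_eq_left (by linarith)
      rw [if_neg h3]
      have hkA := cover k h1 h2 h3
      rw [hA k hkA]
      ring
    · intro hfixd
      have hk : ∀ k, Pmap Sz Sp Sm b (d - a • (M d + F)) k = d k := by
        intro k
        exact congrArg (fun v : Euc n => v k) hfixd
      refine ⟨?_, ?_, ?_, ?_⟩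
      · intro k hkA
        have e := hk k
        rw [Pmap_apply, hcomp, if_neg (dAz k hkA), if_neg (dAp k hkA),
          if_neg (dAm k hkA)] at e
        have h0 : a * (M d k + F k) = 0 := by linarith
        have := (mul_eq_zero.mp h0).resolve_left (ne_of_gt ha)
        linarith
      · intro k hkz
        have e := hk k
        rw [Pmap_apply, if_pos hkz] at e
        exact e.symm
      · intro k hkp
        have e := hk k
        rw [Pmap_apply, hcomp, if_neg (fun h => dzp k h hkp), if_pos hkp] at e
        have hb : b k ≤ d k := by
          have := le_max_right (d k - a * (M d k + F k)) (b k)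
          rw [e] at this; exact this
        have hq : 0 ≤ M d k + F k := by
          have h1 := le_max_left (d k - a * (M d k + F k)) (b k)
          rw [e] at h1
          have h0 : 0 ≤ a * (M d k + F k) := by linarith
          exact (mul_nonneg_iff_of_pos_left ha).mp h0
        refine ⟨by linarith, hq, ?_⟩
        rcases eq_or_lt_of_le hb with heq | hlt
        · rw [← heq, sub_self, zero_mul]
        · rcases max_choice (d k - a * (M d k + F k)) (b k) with hmx | hmx
          · rw [hmx] at e
            have : a * (M d k + F k) = 0 := by linarith
            have := (mul_eq_zero.mp this).resolve_left (ne_of_gt ha)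
            rw [this, mul_zero]
          · rw [hmx] at e; exact absurd e (by linarith)
      · intro k hkm
        have e := hk k
        rw [Pmap_apply, hcomp, if_neg (fun h => dzm k h hkm),
          if_neg (fun h => dpm k h hkm), if_pos hkm] at e
        have hb : d k ≤ b k := by
          have := min_le_right (d k - a * (M d k + F k)) (b k)
          rw [e] at this; exact this
        have hq : M d k + F k ≤ 0 := by
          have h1 := min_le_left (d k - a * (M d k + F k)) (b k)
          rw [e] at h1
          have h0 : a * (M d k + F k) ≤ 0 := by linarith
          exact nonpos_of_mul_nonpos_right h0 ha
        refine ⟨by linarith, hq, ?_⟩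
        rcases eq_or_lt_of_le hb with heq | hlt
        · rw [heq, sub_self, zero_mul]
        · rcases min_choice (d k - a * (M d k + F k)) (b k) with hmn | hmn
          · rw [hmn] at e
            have : a * (M d k + F k) = 0 := by linarith
            have := (mul_eq_zero.mp this).resolve_left (ne_of_gt ha)
            rw [this, mul_zero]
          · rw [hmn] at e; exact absurd e (by linarith)
  refine ⟨d₀, (key d₀).mpr hfix, fun y hy => ?_⟩
  exact hcontr.fixedPoint_unique' ((key y).mp hy) hfix

/-- for every `u` there is exactly one modified Newton direction. -/
theorem stmt4 {n : ℕ} (hn : 1 ≤ n) (c₁ c₂ : ℝ) (g : Euc n → ℝ) (hg : Assump n g c₁ c₂)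
    (w : Fin n → ℝ) (hw : ∀ k, 0 < w k) (γ : ℝ) (hγ : 0 < γ)
    (u : Euc n) :
    ∃! d : Euc n, IsModDir g γ w u d := by
  classical
  have hwt : ∀ k : Fin n, 0 < γ * w k := fun k => mul_pos hγ (hw k)
  have cover : ∀ k, k ∉ IzBar g γ w u → k ∉ IplBar g γ w u → k ∉ ImiBar g γ w u →
      k ∈ ABar g γ w u := by
    intro k h1 h2 h3
    have ht := hwt k
    simp only [ABar, ApBar, AmBar, IzBar, IplBar, ImiBar, Ap, Am, Iz, Ipl, Imi, App, Amm,
      Izp, Izm, Set.mem_union, Set.mem_diff, Set.mem_setOf_eq] at h1 h2 h3 ⊢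
    rcases lt_trichotomy (u k) (γ * gradient g u k - γ * w k) with hc | hc | hc
    · exact Or.inr ⟨hc, fun hA => h3 (Or.inl (Or.inr hA))⟩
    · exact absurd (Or.inl (Or.inl hc)) h3
    · rcases lt_trichotomy (u k) (γ * gradient g u k + γ * w k) with hd | hd | hd
      · by_cases hp1 : γ * gradient g u k + γ * w k < 0
        · exact absurd (Or.inr ⟨hc, hd, hp1⟩) h2
        by_cases hp2 : 0 < γ * gradient g u k - γ * w k
        · exact absurd (Or.inr ⟨hp2, hc, hd⟩) h3
        · exact absurd ⟨⟨hc, hd⟩,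
            fun hB => hB.elim (fun h => hp1 h.2.2) (fun h => hp2 h.1)⟩ h1
      · exact absurd (Or.inl (Or.inl hd)) h2
      · exact Or.inl ⟨hd, fun hA => h2 (Or.inl (Or.inr hA))⟩
  have dAz : ∀ k, k ∈ ABar g γ w u → k ∉ IzBar g γ w u := by
    intro k hk hk'
    have ht := hwt k
    simp only [ABar, ApBar, AmBar, IzBar, Ap, Am, Iz, App, Amm, Izp, Izm,
      Set.mem_union, Set.mem_diff, Set.mem_setOf_eq] at hk hk'
    obtain ⟨⟨h3, h4⟩, -⟩ := hk'
    rcases hk with ⟨h1, -⟩ | ⟨h1, -⟩ <;> linarith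
  have dAp : ∀ k, k ∈ ABar g γ w u → k ∉ IplBar g γ w u := by
    intro k hk hk'
    have ht := hwt k
    simp only [ABar, ApBar, AmBar, IplBar, Ap, Am, Ipl, App, Amm, Izp,
      Set.mem_union, Set.mem_diff, Set.mem_setOf_eq] at hk hk'
    rcases hk with ⟨h1, h2⟩ | ⟨h1, h2⟩ <;>
      rcases hk' with (h3 | ⟨h3, h4⟩) | ⟨h3, h4, h5⟩ <;>
      first
        | exact h2 ⟨h3, h4⟩
        | linarith
  have dAm : ∀ k, k ∈ ABar g γ w u → k ∉ ImiBar g γ w u := by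
    intro k hk hk'
    have ht := hwt k
    simp only [ABar, ApBar, AmBar, ImiBar, Ap, Am, Imi, App, Amm, Izm,
      Set.mem_union, Set.mem_diff, Set.mem_setOf_eq] at hk hk'
    rcases hk with ⟨h1, h2⟩ | ⟨h1, h2⟩ <;>
      rcases hk' with (h3 | ⟨h3, h4⟩) | ⟨h3, h4, h5⟩ <;>
      first
        | exact h2 ⟨h3, h4⟩
        | linarith
  have dzp : ∀ k, k ∈ IzBar g γ w u → k ∉ IplBar g γ w u := by
    intro k hk hk'
    have ht := hwt k
    simp only [IzBar, IplBar, Iz, Ipl, App, Izp, Izm,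
      Set.mem_union, Set.mem_diff, Set.mem_setOf_eq] at hk hk'
    obtain ⟨⟨h1, h2⟩, h0⟩ := hk
    rcases hk' with (h3 | ⟨h3, h4⟩) | ⟨h3, h4, h5⟩
    · linarith
    · linarith
    · exact h0 (Or.inl ⟨h3, h4, h5⟩)
  have dzm : ∀ k, k ∈ IzBar g γ w u → k ∉ ImiBar g γ w u := by
    intro k hk hk'
    have ht := hwt k
    simp only [IzBar, ImiBar, Iz, Imi, Amm, Izp, Izm,
      Set.mem_union, Set.mem_diff, Set.mem_setOf_eq] at hk hk'
    obtain ⟨⟨h1, h2⟩, h0⟩ := hk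
    rcases hk' with (h3 | ⟨h3, h4⟩) | ⟨h3, h4, h5⟩
    · linarith
    · linarith
    · exact h0 (Or.inr ⟨h3, h4, h5⟩)
  have dpm : ∀ k, k ∈ IplBar g γ w u → k ∉ ImiBar g γ w u := by
    intro k hk hk'
    have ht := hwt k
    simp only [IplBar, ImiBar, Ipl, Imi, App, Amm, Izp, Izm,
      Set.mem_union, Set.mem_setOf_eq] at hk hk'
    rcases hk with (h1 | ⟨h1, h2⟩) | ⟨h1, h2, h3⟩ <;>
      rcases hk' with (h4 | ⟨h4, h5⟩) | ⟨h4, h5, h6⟩ <;> linarith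
  set M' : Euc n →L[ℝ] Euc n := γ • fderiv ℝ (gradient g) u with hM'
  have happ : ∀ (d : Euc n) (k : Fin n), M' d k = γ * hess g u d k := by
    intro d k
    rw [hM', ContinuousLinearMap.smul_apply, PiLp.smul_apply, smul_eq_mul]
    rfl
  have mon : ∀ h : Euc n, (γ * c₁) * ‖h‖ ^ 2 ≤ ⟪M' h, h⟫ := by
    intro h
    rw [hM', ContinuousLinearMap.smul_apply, real_inner_smul_left]
    calc γ * c₁ * ‖h‖ ^ 2 = γ * (c₁ * ‖h‖ ^ 2) := by ring
      _ ≤ γ * ⟪hess g u h, h⟫ := mul_le_mul_of_nonneg_left (hg.lower u h) hγ.le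
      _ = γ * ⟪(fderiv ℝ (gradient g) u) h, h⟫ := rfl
  obtain ⟨d₀, hd₀, hu₀⟩ :=
    aux_lcp (γ * c₁) (mul_pos hγ hg.c1_pos) M' mon (Fm g γ w u) (-u)
      (ABar g γ w u) (IzBar g γ w u) (IplBar g γ w u) (ImiBar g γ w u)
      cover dAz dAp dAm dzp dzm dpm
  have conv : ∀ d : Euc n,
      ((∀ k ∈ ABar g γ w u, M' d k = - Fm g γ w u k) ∧
       (∀ k ∈ IzBar g γ w u, d k = (-u) k) ∧
       (∀ k ∈ IplBar g γ w u, 0 ≤ d k - (-u) k ∧ 0 ≤ M' d k + Fm g γ w u k ∧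
         (d k - (-u) k) * (M' d k + Fm g γ w u k) = 0) ∧
       (∀ k ∈ ImiBar g γ w u, d k - (-u) k ≤ 0 ∧ M' d k + Fm g γ w u k ≤ 0 ∧
         (d k - (-u) k) * (M' d k + Fm g γ w u k) = 0))
      ↔ IsModDir g γ w u d := by
    intro d
    unfold IsModDir
    simp only [happ, PiLp.neg_apply, sub_neg_eq_add]
  exact ⟨d₀, (conv d₀).mp hd₀, fun y hy => hu₀ y ((conv y).mpr hy)⟩
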